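/- Let V be a finite-dimensional symplectic vector space over an algebraically closed field F of characteristic zero, with symplectic form ω, and let X ∈ sp(V) (i.e. ω(Xv, w) + ω(v, Xw) = 0 for all v, w). If for some λ ∈ F one has 2·rank(X - λ·Id_V) < dim V, then λ = 0. -/

import Mathlib

open Module

/-- For `X ∈ sp(V)` (skew w.r.t. a nondegenerate alternating form `ω`), if
`2·rank(X - λ·Id) < dim V` for some scalar `λ`, then `λ = 0`. -/
theorem stmt_5 (F V : Type*) [Field F] [IsAlgClosed F] [CharZero F]
    [AddCommGroup V] [Module F V] [FiniteDimensional F V]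
    (ω : LinearMap.BilinForm F V) (hnd : ω.Nondegenerate)
    (halt : ∀ v : V, ω v v = 0)
    (X : Module.End F V) (hX : ∀ v w : V, ω (X v) w = - ω v (X w))
    (lam : F)
    (h : 2 * finrank F ↥(LinearMap.range (X - lam • 1)) < finrank F V) :
    lam = 0 := by
  by_contra hlam
  have hrefl : ω.IsRefl := (LinearMap.IsAlt.isRefl halt)
  set K := LinearMap.ker (X - lam • 1) with hK
  -- K is totally isotropic
  have hiso : K ≤ ω.orthogonal K := by
    intro v hv
    rw [LinearMap.BilinForm.mem_orthogonal_iff]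
    intro w hw
    have hv' : X v = lam • v := by
      have := hv
      rw [hK, LinearMap.mem_ker, LinearMap.sub_apply] at this
      simpa [sub_eq_zero] using this
    have hw' : X w = lam • w := by
      have := hw
      rw [hK, LinearMap.mem_ker, LinearMap.sub_apply] at this
      simpa [sub_eq_zero] using this
    have := hX w v
    rw [hw', hv'] at this
    simp only [map_smul, LinearMap.smul_apply, smul_eq_mul] at this
    have h2 : (2 * lam) * ω w v = 0 := by ring_nf; linear_combination this
    have : ω w v = 0 := by
      rcases mul_eq_zero.1 h2 with h3 | h3
      · exact absurd h3 (mul_ne_zero two_ne_zero hlam)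
      · exact h3
    exact this
  have hdim := Submodule.finrank_mono hiso
  rw [LinearMap.BilinForm.finrank_orthogonal hnd] at hdim
  have hrn := LinearMap.finrank_range_add_finrank_ker (X - lam • 1)
  rw [← hK] at hrn
  have hKle : finrank F K ≤ finrank F V := Submodule.finrank_le K
  omega
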